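/- If p is a prime dividing F_{p+1}, then R_n^(p+1) ≡ I_n (mod p) when n is odd, and R_n^(p+1) ≡ -I_n (mod p) when n is even. -/

import Mathlib

/-- `R n` over `ZMod p`: the `n × n` matrix whose 1-based `(i,j)` entry is `C(i-1, n-j)`. -/
def RmatMod (p n : ℕ) : Matrix (Fin n) (Fin n) (ZMod p) :=
  Matrix.of fun i j => (Nat.choose i.1 (n - 1 - j.1) : ZMod p)

section NT

open Polynomial

lemma fib_cast_eq_neg_one (p : ℕ) (hp : p.Prime) (hdvd : p ∣ Nat.fib (p + 1)) :
    ((Nat.fib p : ZMod p)) = -1 := by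
  haveI := Fact.mk hp
  set K := ZMod p
  set f : K[X] := X ^ 2 - X - 1 with hf
  have hdeg : f.degree = 2 := by
    unfold f; compute_degree!
  have hmonic : f.Monic := by
    unfold f; monicity!
  set S := AdjoinRoot f with hS
  haveI : Nontrivial S := AdjoinRoot.nontrivial f (by rw [hdeg]; norm_num)
  haveI : CharP S p := charP_of_injective_algebraMap (algebraMap K S).injective p
  set α : S := AdjoinRoot.root f with hα
  have hroot : α ^ 2 = α + 1 := by
    have h0 : (aeval α) (X ^ 2 - X - 1 : K[X]) = 0 := by
      rw [hα, AdjoinRoot.aeval_eq]; exact AdjoinRoot.mk_self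
    simp only [map_sub, map_pow, aeval_X, map_one] at h0
    linear_combination h0
  -- power formula
  have hpow : ∀ k : ℕ, α ^ (k + 1) = (Nat.fib (k+1) : S) * α + (Nat.fib k : S) := by
    intro k
    induction k with
    | zero => simp
    | succ k ih =>
      have h2 : α ^ (k + 2) = α ^ (k+1) * α := by ring
      rw [h2, ih, Nat.fib_add_two]
      push_cast
      linear_combination ((Nat.fib (k+1) : S)) * hroot
  -- Frobenius
  set β : S := α ^ p with hβ
  have hβroot : β ^ 2 = β + 1 := by
    have : β ^ 2 = (α ^ 2) ^ p := by rw [hβ]; ring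
    rw [this, hroot, add_pow_char, one_pow, hβ]
  obtain ⟨q, hq⟩ : ∃ q, p = q + 1 := ⟨p - 1, (Nat.succ_pred_eq_of_pos hp.pos).symm⟩
  set u : K := (Nat.fib p : K) with hu
  set v : K := (Nat.fib q : K) with hv
  have hfibp1 : ((Nat.fib (p+1) : K)) = 0 := (ZMod.natCast_eq_zero_iff _ _).mpr hdvd
  have huv : v = -u := by
    have : Nat.fib (p + 1) = Nat.fib p + Nat.fib q := by
      rw [hq]; rw [show q + 1 + 1 = q + 2 from rfl, Nat.fib_add_two]; ring
    have := congrArg (Nat.cast : ℕ → K) this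
    push_cast at this
    rw [hfibp1] at this
    rw [hu, hv]
    linear_combination -this
  have hβeq : β = algebraMap K S u * α + algebraMap K S v := by
    have h3 := hpow q
    rw [← hq] at h3
    rw [hβ, h3, hu, hv]
    rw [map_natCast (algebraMap K S), map_natCast (algebraMap K S)]
  have hβroot' : (algebraMap K S u * α + algebraMap K S v) ^ 2
      = (algebraMap K S u * α + algebraMap K S v) + 1 := by
    rw [← hβeq]; exact hβroot
  set g : K[X] := C (u*u + u*v + u*v) * X + C (u*u + v*v) with hg
  set h : K[X] := C u * X + C (v + 1) with hh
  have lhs : ∀ (a b : K), AdjoinRoot.mk f (C a * X + C b)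
      = algebraMap K S a * α + algebraMap K S b := by
    intro a b
    rw [map_add, map_mul, AdjoinRoot.mk_C, AdjoinRoot.mk_X, AdjoinRoot.mk_C,
      AdjoinRoot.algebraMap_eq, hα]
  have key : AdjoinRoot.mk f g = AdjoinRoot.mk f h := by
    rw [hg, hh, lhs, lhs]
    simp only [map_add, map_mul, map_one]
    linear_combination hβroot' - (algebraMap K S u) * (algebraMap K S u) * hroot
  have hdvd2 : f ∣ g - h := (AdjoinRoot.mk_eq_mk).mp key
  have hzero : g - h = 0 := by
    refine Polynomial.eq_zero_of_dvd_of_degree_lt hdvd2 ?_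
    rw [hdeg]
    have : g - h = C (u*u + u*v + u*v - u) * X + C (u*u + v*v - (v+1)) := by
      rw [hg, hh]; push_cast [map_sub]; ring
    rw [this]
    exact lt_of_le_of_lt (Polynomial.degree_linear_le) (by norm_num)
  have hgh : g = h := by linear_combination hzero
  have e1 : u*u + u*v + u*v = u := by
    have := congrArg (fun q : K[X] => q.coeff 1) hgh
    simpa [hg, hh, Polynomial.coeff_one] using this
  have e2 : u*u + v*v = v + 1 := by
    have := congrArg (fun q : K[X] => q.coeff 0) hgh
    simpa [hg, hh, Polynomial.coeff_one] using this
  have : u = -1 := by linear_combination (-2 : K)*e1 - e2 + (3*u+v-1)*huv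
  rw [hu] at this
  exact this

end NT

section MX

open MvPolynomial

lemma RmatMod_master (p n : ℕ) (hfp1 : ((Nat.fib (p+1) : ZMod p)) = 0)
    (hfp : ((Nat.fib p : ZMod p)) = -1) (hn : 0 < n) :
    RmatMod p n ^ (p + 1) = ((-1 : ZMod p) ^ (n - 1)) • 1 := by
  set K := ZMod p
  set m := n - 1 with hm
  set σ : MvPolynomial (Fin 2) K →ₐ[K] MvPolynomial (Fin 2) K := aeval ![X 0 + X 1, X 0] with hσ
  have hσ0 : σ (X 0) = X 0 + X 1 := by rw [hσ]; simp
  have hσ1 : σ (X 1) = X 0 := by rw [hσ]; simp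
  set v : Fin n → MvPolynomial (Fin 2) K := fun k => X 0 ^ (k : ℕ) * X 1 ^ (m - (k : ℕ)) with hv
  have castP : ∀ N : ℕ, ((N : MvPolynomial (Fin 2) K)) = C ((N : K)) := by
    intro N; exact (map_natCast C N).symm
  have powX0 : ∀ t : ℕ, (σ ^ t) (X 0)
      = (Nat.fib (t+1) : MvPolynomial (Fin 2) K) * X 0 + (Nat.fib t : MvPolynomial (Fin 2) K) * X 1 := by
    intro t
    induction t with
    | zero => simp
    | succ t ih =>
      rw [pow_succ', AlgHom.mul_apply, ih, map_add, map_mul, map_mul, map_natCast,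
        map_natCast, hσ0, hσ1]
      push_cast [Nat.fib_add_two]
      ring
  have powX1 : ∀ t : ℕ, (σ ^ (t+1)) (X 1)
      = (Nat.fib (t+1) : MvPolynomial (Fin 2) K) * X 0 + (Nat.fib t : MvPolynomial (Fin 2) K) * X 1 := by
    intro t
    rw [pow_succ, AlgHom.mul_apply, hσ1, powX0]
  have hfp2 : ((Nat.fib (p+2) : K)) = -1 := by
    rw [Nat.fib_add_two]
    push_cast
    rw [hfp, hfp1]
    ring
  have hfinX0 : (σ ^ (p+1)) (X 0) = - X 0 := by
    rw [powX0 (p+1), castP, castP, show p + 1 + 1 = p + 2 from rfl, hfp2, hfp1]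
    simp
  have hfinX1 : (σ ^ (p+1)) (X 1) = - X 1 := by
    rw [powX1 p, castP, castP, hfp1, hfp]
    simp
  have hfin : ∀ k : Fin n, (σ ^ (p+1)) (v k) = (-1 : MvPolynomial (Fin 2) K) ^ m * v k := by
    intro k
    have hk : (k : ℕ) ≤ m := by have := k.2; omega
    rw [hv]
    simp only [map_mul, map_pow, hfinX0, hfinX1]
    rw [neg_pow (X 0 : MvPolynomial (Fin 2) K), neg_pow (X 1 : MvPolynomial (Fin 2) K)]
    rw [show ((-1 : MvPolynomial (Fin 2) K) ^ m) = (-1) ^ ((k : ℕ) + (m - (k:ℕ))) from by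
      rw [Nat.add_sub_cancel' hk]]
    rw [pow_add]
    ring
  have claim1 : ∀ k : Fin n, σ (v k)
      = ∑ i : Fin n, (Nat.choose (k : ℕ) (m - (i : ℕ)) : MvPolynomial (Fin 2) K) * v i := by
    intro k
    have hk : (k : ℕ) ≤ m := by have := k.2; omega
    have expand : σ (v k) = ∑ s ∈ Finset.range ((k : ℕ)+1),
        (Nat.choose (k : ℕ) s : MvPolynomial (Fin 2) K) * (X 0 ^ (m - s) * X 1 ^ s) := by
      rw [hv]
      simp only [map_mul, map_pow, hσ0, hσ1]
      rw [add_comm (X 0 : MvPolynomial (Fin 2) K) (X 1), add_pow, Finset.sum_mul]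
      refine Finset.sum_congr rfl ?_
      intro s hs
      have hs' : s ≤ (k : ℕ) := Finset.mem_range_succ_iff.mp hs
      calc (X 1 : MvPolynomial (Fin 2) K) ^ s * X 0 ^ ((k:ℕ) - s) * (Nat.choose (k:ℕ) s : MvPolynomial (Fin 2) K) * X 0 ^ (m - (k:ℕ))
          = (Nat.choose (k:ℕ) s : MvPolynomial (Fin 2) K) * (X 0 ^ (((k:ℕ) - s) + (m - (k:ℕ))) * X 1 ^ s) := by
            rw [pow_add]; ring
        _ = (Nat.choose (k:ℕ) s : MvPolynomial (Fin 2) K) * (X 0 ^ (m - s) * X 1 ^ s) := by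
            rw [show (k:ℕ) - s + (m - (k:ℕ)) = m - s from by omega]
    rw [expand]
    have hmn : m < n := by omega
    have hfilter : (∑ i : Fin n, (Nat.choose (k : ℕ) (m - (i : ℕ)) : MvPolynomial (Fin 2) K) * v i)
        = ∑ i ∈ Finset.univ.filter (fun i : Fin n => m - (k:ℕ) ≤ (i:ℕ)),
            (Nat.choose (k : ℕ) (m - (i : ℕ)) : MvPolynomial (Fin 2) K) * v i := by
      refine (Finset.sum_filter_of_ne ?_).symm
      intro i _ hne
      by_contra hcon
      apply hne
      rw [Nat.choose_eq_zero_of_lt (by omega : (k:ℕ) < m - (i:ℕ))]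
      simp
    rw [hfilter]
    refine Finset.sum_nbij' (fun s => (⟨m - s, by omega⟩ : Fin n))
      (fun i => m - (i : ℕ)) ?_ ?_ ?_ ?_ ?_
    · intro s hs
      have := Finset.mem_range_succ_iff.mp hs
      simp only [Finset.mem_filter, Finset.mem_univ, true_and]
      omega
    · intro i hi
      simp only [Finset.mem_filter, Finset.mem_univ, true_and] at hi
      have := i.2
      exact Finset.mem_range_succ_iff.mpr (show m - (i:ℕ) ≤ (k:ℕ) by omega)
    · intro s hs
      have := Finset.mem_range_succ_iff.mp hs
      show m - (m - s) = s
      omega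
    · intro i hi
      simp only [Finset.mem_filter, Finset.mem_univ, true_and] at hi
      have := i.2
      refine Fin.ext ?_
      show m - (m - (i:ℕ)) = (i:ℕ)
      have := i.2
      omega
    · intro s hs
      have hs' := Finset.mem_range_succ_iff.mp hs
      rw [hv]
      simp only
      rw [show m - (m - s) = s from by omega]
  have hRentry : ∀ a b : Fin n, RmatMod p n a b = ((Nat.choose (a:ℕ) (m - (b:ℕ)) : K)) := by
    intro a b
    show ((Nat.choose (a:ℕ) (n - 1 - (b:ℕ)) : K)) = _
    rw [← hm]
  have claim1' : ∀ k : Fin n, σ (v k) = ∑ i : Fin n, RmatMod p n k i • v i := by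
    intro k
    rw [claim1 k]
    refine Finset.sum_congr rfl fun i _ => ?_
    rw [hRentry k i, castP, smul_eq_C_mul]
  have claim2 : ∀ (t : ℕ) (k : Fin n),
      (σ ^ t) (v k) = ∑ i : Fin n, (RmatMod p n ^ t) k i • v i := by
    intro t
    induction t with
    | zero =>
      intro k
      simp [Matrix.one_apply]
    | succ t ih =>
      intro k
      rw [pow_succ', AlgHom.mul_apply, ih, map_sum]
      simp_rw [map_smul, claim1', Finset.smul_sum, smul_smul]
      rw [Finset.sum_comm]
      refine Finset.sum_congr rfl fun j _ => ?_
      rw [← Finset.sum_smul, pow_succ, Matrix.mul_apply]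
  -- coefficient extraction
  set μ : Fin n → (Fin 2 →₀ ℕ) := fun i => Finsupp.single 0 (i:ℕ) + Finsupp.single 1 (m - (i:ℕ)) with hμ
  have hvmono : ∀ i : Fin n, v i = monomial (μ i) 1 := by
    intro i
    rw [hv]
    simp only
    rw [X_pow_eq_monomial, X_pow_eq_monomial, monomial_mul, one_mul, hμ]
  have hμinj : Function.Injective μ := by
    intro i j hij
    rw [hμ] at hij
    have := congrArg (fun g : Fin 2 →₀ ℕ => g 0) hij
    simp only [Finsupp.add_apply, Finsupp.single_apply] at this
    refine Fin.ext ?_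
    simpa using this
  have hcoeff : ∀ i j : Fin n, coeff (μ j) (v i) = if i = j then 1 else 0 := by
    intro i j
    rw [hvmono i, coeff_monomial]
    by_cases h : i = j
    · simp [h]
    · rw [if_neg (fun hc => h (hμinj hc)), if_neg h]
  ext k j
  have e : (∑ i : Fin n, (RmatMod p n ^ (p+1)) k i • v i)
      = (-1 : MvPolynomial (Fin 2) K) ^ m * v k := (claim2 (p+1) k).symm.trans (hfin k)
  have h2 := congrArg (MvPolynomial.coeff (μ j)) e
  rw [show ((-1 : MvPolynomial (Fin 2) K)) = C (-1 : K) from by simp] at h2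
  rw [← C_pow, coeff_C_mul] at h2
  rw [MvPolynomial.coeff_sum] at h2
  simp_rw [MvPolynomial.coeff_smul, hcoeff, smul_ite, smul_zero, smul_eq_mul, mul_one,
    Finset.sum_ite_eq' Finset.univ, Finset.mem_univ, if_true] at h2
  rw [h2, Matrix.smul_apply, Matrix.one_apply]
  by_cases hkj : k = j <;> simp [hkj]

end MX

/-- If `p` is a prime dividing `F_{p+1}`, then `R_n ^ (p+1) ≡ I (mod p)` for odd `n`
and `R_n ^ (p+1) ≡ -I (mod p)` for even `n`. -/
theorem Rmat_pow_p_add_one (p n : ℕ) (hp : p.Prime) (hdvd : p ∣ Nat.fib (p + 1)) :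
    (Odd n → RmatMod p n ^ (p + 1) = 1) ∧
      (Even n → RmatMod p n ^ (p + 1) = -1) := by
  rcases Nat.eq_zero_or_pos n with h0 | hn
  · subst h0
    constructor
    · intro h; rcases h with ⟨t, ht⟩; omega
    · intro _; ext i j; exact i.elim0
  · have hfp1 : ((Nat.fib (p+1) : ZMod p)) = 0 :=
      (ZMod.natCast_eq_zero_iff _ _).mpr hdvd
    have hfp := fib_cast_eq_neg_one p hp hdvd
    have hM := RmatMod_master p n hfp1 hfp hn
    constructor
    · intro hodd
      rw [hM]
      have he : Even (n - 1) := by rcases hodd with ⟨t, ht⟩; exact ⟨t, by omega⟩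
      rw [he.neg_one_pow, one_smul]
    · intro heven
      rw [hM]
      have ho : Odd (n - 1) := by rcases heven with ⟨t, ht⟩; exact ⟨t - 1, by omega⟩
      rw [ho.neg_one_pow, neg_smul, one_smul]
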